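/- arXiv:2310.08066 — 4 statements merged into one kernel-verified Lean document; each statement's English description precedes it below -/
import Mathlib

section
/- For all real numbers a, b, c, d with b = 0, c = 0, 0 ≤ a ≤ 1, and 0 ≤ d ≤ 1, the quantity min over α ∈ [0,1] of max{α·a + (1−α)·b, α·c + (1−α)·d} is at most 1/2, and the bound 1/2 is attained when a = d = 1. -/
theorem stmt8 (a b c d : ℝ) (hb : b = 0) (hc : c = 0)
    (ha : a ∈ Set.Icc (0 : ℝ) 1) (hd : d ∈ Set.Icc (0 : ℝ) 1) :
    sInf ((fun α => max (α * a + (1 - α) * b) (α * c + (1 - α) * d)) ''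
        Set.Icc (0 : ℝ) 1) ≤ 1 / 2 ∧
    (a = 1 → d = 1 →
      sInf ((fun α => max (α * a + (1 - α) * b) (α * c + (1 - α) * d)) ''
        Set.Icc (0 : ℝ) 1) = 1 / 2) := by
  obtain ⟨ha0, ha1⟩ := ha
  obtain ⟨hd0, hd1⟩ := hd
  subst hb hc
  set S := ((fun α => max (α * a + (1 - α) * 0) (α * 0 + (1 - α) * d)) ''
      Set.Icc (0 : ℝ) 1) with hS
  have hbdd : BddBelow S := by
    refine ⟨0, ?_⟩
    rintro x ⟨α, ⟨hα0, hα1⟩, rfl⟩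
    have : 0 ≤ α * a := mul_nonneg hα0 ha0
    simp only
    nlinarith [le_max_left (α * a + (1-α)*0) (α * 0 + (1-α)*d)]
  have hmem : max ((1/2 : ℝ) * a + (1 - 1/2) * 0) ((1/2 : ℝ) * 0 + (1 - 1/2) * d) ∈ S := by
    exact ⟨1/2, by norm_num, rfl⟩
  have hle : sInf S ≤ 1 / 2 := by
    refine le_trans (csInf_le hbdd hmem) ?_
    rw [max_le_iff]
    constructor <;> nlinarith
  refine ⟨hle, fun ha1' hd1' => ?_⟩
  refine le_antisymm hle ?_
  refine le_csInf ⟨_, hmem⟩ ?_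
  rintro x ⟨α, ⟨hα0, hα1⟩, rfl⟩
  subst ha1' hd1'
  simp only
  rcases le_total α (1/2) with h | h
  · have : (1:ℝ)/2 ≤ (1-α) * 1 := by linarith
    nlinarith [le_max_right (α * 1 + (1-α)*0) (α * 0 + (1-α)*1)]
  · nlinarith [le_max_left (α * 1 + (1-α)*0) (α * 0 + (1-α)*1)]
end

section
/- For all real ρ, g, h with ρ ∈ [0,1] and g, h ∈ [0,1] and (2−g−h) > 0, min{ρ(1−g), (1−ρ)(1−h), 2g−1} ≤ 1/3. -/
theorem stmt17 (ρ g h : ℝ) (hρ : ρ ∈ Set.Icc (0 : ℝ) 1)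
    (hg : g ∈ Set.Icc (0 : ℝ) 1) (hh : h ∈ Set.Icc (0 : ℝ) 1)
    (hden : 0 < 2 - g - h) :
    min (ρ * (1 - g)) (min ((1 - ρ) * (1 - h)) (2 * g - 1)) ≤ 1 / 3 := by
  obtain ⟨h1, h2⟩ := hρ
  obtain ⟨h3, h4⟩ := hg
  rcases le_or_gt g (2/3) with hc | hc
  · exact le_trans (le_trans (min_le_right _ _) (min_le_right _ _)) (by linarith)
  · refine le_trans (min_le_left _ _) ?_
    nlinarith
end

section
/- For all real k, i ∈ [0,1] with 2i + 1 − k > 0: if k + i < 2/3 then i(k+1)/(2i+1−k) < 1/3, and if k + i ≥ 2/3 then (3 − 2k + i − √((3−2k+i)² − 8(1−k)))/4 ≤ 1/3, where the discriminant (3−2k+i)² − 8(1−k) is nonnegative for all k, i ∈ [0,1]. -/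
theorem stmt18 (k i : ℝ) (hk : k ∈ Set.Icc (0 : ℝ) 1)
    (hi : i ∈ Set.Icc (0 : ℝ) 1) (hden : 0 < 2 * i + 1 - k) :
    0 ≤ (3 - 2 * k + i) ^ 2 - 8 * (1 - k) ∧
    (k + i < 2 / 3 → i * (k + 1) / (2 * i + 1 - k) < 1 / 3) ∧
    (2 / 3 ≤ k + i →
      (3 - 2 * k + i - Real.sqrt ((3 - 2 * k + i) ^ 2 - 8 * (1 - k))) / 4 ≤ 1 / 3) := by
  obtain ⟨hk0, hk1⟩ := hk
  obtain ⟨hi0, hi1⟩ := hi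
  have hdisc : 0 ≤ (3 - 2 * k + i) ^ 2 - 8 * (1 - k) := by
    nlinarith [sq_nonneg (2*k-1), sq_nonneg i, mul_nonneg hi0 (by linarith : (0:ℝ) ≤ 3 - 2*k)]
  refine ⟨hdisc, ?_, ?_⟩
  · intro h
    rw [div_lt_iff₀ hden]
    nlinarith [sq_nonneg (k-i), mul_nonneg hi0 hk0, mul_pos (by linarith : (0:ℝ) < 2/3 - k - i) (by linarith : (0:ℝ) < 2/3 - k + i)]
  · intro h
    have hs := Real.sq_sqrt hdisc
    have hsn := Real.sqrt_nonneg ((3 - 2 * k + i) ^ 2 - 8 * (1 - k))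
    have key : 5/3 - 2*k + i ≤ Real.sqrt ((3 - 2 * k + i) ^ 2 - 8 * (1 - k)) := by
      rcases le_or_gt (5/3 - 2*k + i) 0 with h1 | h1
      · linarith
      · nlinarith [sq_nonneg (Real.sqrt ((3 - 2 * k + i) ^ 2 - 8 * (1 - k)) - (5/3 - 2*k + i))]
    linarith
end

section
/- Consider the 3×3 bimatrix game with R = [[0,0,0],[0,0,1],[1/3,2/3,2/3]] and C = [[0,1/3,1/3],[0,0,1/3],[0,1,2/3]], and let x_s = y_s = e₁, w = z = e₃. Then min over α, β ∈ [0,1] of f(α x_s + (1−α)w, β y_s + (1−β)z) = 1/3, where f(x,y) = max{max{Ry} − xᵀRy, max{Cᵀx} − xᵀCy}. -/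
open Matrix

noncomputable def fR {m n : ℕ} (R : Matrix (Fin m) (Fin n) ℝ)
    (x : Fin m → ℝ) (y : Fin n → ℝ) : ℝ :=
  (⨆ i, R.mulVec y i) - x ⬝ᵥ R.mulVec y

noncomputable def fC {m n : ℕ} (C : Matrix (Fin m) (Fin n) ℝ)
    (x : Fin m → ℝ) (y : Fin n → ℝ) : ℝ :=
  (⨆ j, C.transpose.mulVec x j) - x ⬝ᵥ C.mulVec y

noncomputable def Rmat : Matrix (Fin 3) (Fin 3) ℝ :=
  !![0, 0, 0; 0, 0, 1; 1/3, 2/3, 2/3]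

noncomputable def Cmat : Matrix (Fin 3) (Fin 3) ℝ :=
  !![0, 1/3, 1/3; 0, 0, 1/3; 0, 1, 2/3]

/-- mix t e₁ (1-t) e₃ -/
noncomputable def mix (t : ℝ) : Fin 3 → ℝ :=
  t • (Pi.single 0 1 : Fin 3 → ℝ) + (1 - t) • (Pi.single 2 1 : Fin 3 → ℝ)

lemma sup3 (g : Fin 3 → ℝ) : (⨆ i, g i) = max (g 0) (max (g 1) (g 2)) := by
  apply le_antisymm
  · apply ciSup_le
    intro i
    fin_cases i
    · exact le_max_left _ _
    · exact (le_max_left _ _).trans (le_max_right _ _)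
    · exact (le_max_right _ _).trans (le_max_right _ _)
  · have hb : BddAbove (Set.range g) := (Set.finite_range g).bddAbove
    exact max_le (le_ciSup hb 0) (max_le (le_ciSup hb 1) (le_ciSup hb 2))

theorem stmt19 :
    IsLeast
      ((fun p : ℝ × ℝ =>
          max (fR Rmat (mix p.1) (mix p.2)) (fC Cmat (mix p.1) (mix p.2))) ''
        (Set.Icc (0 : ℝ) 1 ×ˢ Set.Icc (0 : ℝ) 1))
      (1 / 3) := by
  constructor
  · refine ⟨(1, 1), ⟨⟨le_of_lt one_pos, le_refl 1⟩, ⟨le_of_lt one_pos, le_refl 1⟩⟩, ?_⟩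
    simp only [fR, fC, sup3]
    simp [Rmat, Cmat, mix, Matrix.mulVec, Matrix.transpose, dotProduct,
      Fin.sum_univ_three, Pi.single_apply]
  · rintro v ⟨⟨a, b⟩, ⟨⟨ha0, ha1⟩, hb0, hb1⟩, rfl⟩
    simp only [fR, fC, sup3]
    simp only [Set.mem_Icc] at *
    simp [Rmat, Cmat, mix, Matrix.mulVec, Matrix.transpose, dotProduct,
      Fin.sum_univ_three, Pi.single_apply]
    by_cases h : (3:ℝ)⁻¹ ≤ 0 ⊔ ((3⁻¹ * a + (1 - a)) ⊔ (3⁻¹ * a + 2 / 3 * (1 - a))) -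
        (a * (3⁻¹ * (1 - b)) + (1 - a) * (2 / 3 * (1 - b)))
    · exact Or.inr h
    · left
      push_neg at h
      have hs : (3⁻¹ * a + (1 - a)) ≤ 0 ⊔ ((3⁻¹ * a + (1 - a)) ⊔ (3⁻¹ * a + 2 / 3 * (1 - a))) :=
        le_max_of_le_right (le_max_left _ _)
      have h1 : (1 - b) ≤ 0 ⊔ ((1 - b) ⊔ (3⁻¹ * b + 2 / 3 * (1 - b))) :=
        le_max_of_le_right (le_max_left _ _)
      have h2 : (3⁻¹ * b + 2 / 3 * (1 - b)) ≤ 0 ⊔ ((1 - b) ⊔ (3⁻¹ * b + 2 / 3 * (1 - b))) :=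
        le_max_of_le_right (le_max_right _ _)
      have hfc : a * (1 + b) > 2 * b := by nlinarith [hs]
      rcases le_or_gt b (1/2) with hb | hb
      · nlinarith [h1, hfc, mul_nonneg ha0 hb0]
      · nlinarith [h2, hfc, mul_nonneg ha0 hb0, mul_nonneg (sub_nonneg.2 hb1) (sub_nonneg.2 ha1)]
end
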